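/- Let d ≥ 3 be an integer, G = (V,E) a finite d-claw free graph, w : V → ℝ positive, A* an independent set of maximum weight, and A an independent set admitting no local improvement of w²(A) (in particular A is maximal, so charges are defined). With ε := 1/5308416 and δ := 1/6, if w(C) ≥ (25/12)·ε·δ·w(A), then w(A*) ≤ ((d−εδ)/2)·w(A). -/
import Mathlib


open Finset

open scoped Classical

variable {V : Type*}

noncomputable section

/-- Neighborhood of `U` in `W`: vertices of `W` that lie in `U` or are adjacent to some
vertex of `U`. -/
def nbhd (G : SimpleGraph V) (U W : Finset V) : Finset V :=
  W.filter (fun x => x ∈ U ∨ ∃ u ∈ U, G.Adj u x)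

/-- Neighborhood of a single vertex `u` in `W`. -/
def nbhd1 (G : SimpleGraph V) (u : V) (W : Finset V) : Finset V :=
  nbhd G {u} W

/-- Total weight of a finite set of vertices. -/
def wsum (w : V → ℝ) (U : Finset V) : ℝ := ∑ x ∈ U, w x

/-- Total squared weight of a finite set of vertices. -/
def wsq (w : V → ℝ) (U : Finset V) : ℝ := ∑ x ∈ U, (w x) ^ 2

/-- A finite set of vertices is independent. -/
def IsIndep (G : SimpleGraph V) (S : Finset V) : Prop :=
  ∀ a ∈ S, ∀ b ∈ S, a ≠ b → ¬ G.Adj a b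

/-- `G` is `d`-claw free: every independent subset of the neighborhood of any vertex has
size at most `d - 1`. -/
def ClawFree (G : SimpleGraph V) (d : ℕ) : Prop :=
  ∀ v : V, ∀ S : Finset V, (∀ x ∈ S, G.Adj v x) → IsIndep G S → S.card ≤ d - 1

/-- `X` is a local improvement of `w²(A)`. -/
def LocalImprovement (G : SimpleGraph V) (d : ℕ) (w : V → ℝ) (A X : Finset V) : Prop :=
  IsIndep G X ∧ X.card ≤ (d - 1) ^ 2 + (d - 1) ∧ wsq w (nbhd G X A) < wsq w X

/-- No claw improves `w²(A)`: `w²(T) ≤ w²(N(T,A))` for every independent set `T` that is a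
singleton or whose vertices are all adjacent to a common vertex. -/
def NoClawImproves (G : SimpleGraph V) (w : V → ℝ) (A : Finset V) : Prop :=
  ∀ T : Finset V, IsIndep G T → (T.card = 1 ∨ ∃ v : V, ∀ x ∈ T, G.Adj v x) →
    wsq w T ≤ wsq w (nbhd G T A)

/-- The charge map, relative to a choice `n` of heaviest neighbors. -/
def charge (G : SimpleGraph V) (w : V → ℝ) (A : Finset V) (n : V → V) (u v : V) : ℝ :=
  if v = n u then w u - wsum w (nbhd1 G u A) / 2 else 0

/-- `u ∈ T_v` is single (with `√ε = 1/2304`). -/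
def IsSingle (G : SimpleGraph V) (w : V → ℝ) (A : Finset V) (u v : V) : Prop :=
  (1 - 1 / 2304 : ℝ) ≤ w u / w v ∧ w u / w v ≤ 1 + 1 / 2304 ∧
  wsum w (nbhd1 G u A) ≤ (1 + 1 / 2304) * w v

/-- `u ∈ T_v` is double (with `√ε = 1/2304`). -/
def IsDouble (G : SimpleGraph V) (w : V → ℝ) (A : Finset V) (u v : V) : Prop :=
  2 ≤ (nbhd1 G u A).card ∧
  ∃ v₂ ∈ (nbhd1 G u A).erase v, (∀ x ∈ (nbhd1 G u A).erase v, w x ≤ w v₂) ∧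
    (1 - 1 / 2304 : ℝ) ≤ w u / w v ∧ w u / w v ≤ 1 + 1 / 2304 ∧
    (1 - 1 / 2304 : ℝ) ≤ w v₂ / w v ∧ w v₂ / w v ≤ 1 ∧
    (2 - 1 / 2304) * w v ≤ wsum w (nbhd1 G u A) ∧ wsum w (nbhd1 G u A) < 2 * w u

/-- The contribution map. -/
def contr (G : SimpleGraph V) (w : V → ℝ) (A : Finset V) (u v : V) : ℝ :=
  if v ∈ nbhd1 G u A then max 0 (((w u) ^ 2 - wsq w ((nbhd1 G u A).erase v)) / w v) else 0

-- generic finset lemmas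
lemma wsq_nonneg (w : V → ℝ) (S : Finset V) : 0 ≤ wsq w S :=
  Finset.sum_nonneg fun _ _ => sq_nonneg _

lemma wsq_mono (w : V → ℝ) {S T : Finset V} (h : S ⊆ T) : wsq w S ≤ wsq w T :=
  Finset.sum_le_sum_of_subset_of_nonneg h fun _ _ _ => sq_nonneg _

lemma wsq_union_le (w : V → ℝ) (S T : Finset V) [DecidableEq V] :
    wsq w (S ∪ T) ≤ wsq w S + wsq w T := by
  have := Finset.sum_union_inter (s₁ := S) (s₂ := T) (f := fun x => (w x) ^ 2)
  have h2 : 0 ≤ wsq w (S ∩ T) := wsq_nonneg w _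
  unfold wsq at *
  linarith

lemma wsq_biUnion_le (w : V → ℝ) [DecidableEq V] (s : Finset V) (g : V → Finset V) :
    wsq w (s.biUnion g) ≤ ∑ u ∈ s, wsq w (g u) := by
  classical
  induction s using Finset.induction_on with
  | empty => simp [wsq]
  | @insert a s ha ih =>
      rw [Finset.biUnion_insert, Finset.sum_insert ha]
      calc wsq w (g a ∪ s.biUnion g) ≤ wsq w (g a) + wsq w (s.biUnion g) :=
            wsq_union_le w _ _
        _ ≤ _ := by linarith

set_option maxHeartbeats 1000000 in
theorem stmt14 [Fintype V] (G : SimpleGraph V) (d : ℕ) (hd : 3 ≤ d) (hG : ClawFree G d)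
    (w : V → ℝ) (hw : ∀ v, 0 < w v) (Astar A : Finset V)
    (hAstarIndep : IsIndep G Astar)
    (hAstarMax : ∀ S : Finset V, IsIndep G S → wsum w S ≤ wsum w Astar)
    (hAIndep : IsIndep G A) (hAmax : ∀ v : V, (nbhd1 G v A).Nonempty)
    (hNoImp : ∀ X : Finset V, ¬ LocalImprovement G d w A X)
    (n : V → V)
    (hn : ∀ u ∈ Astar, n u ∈ nbhd1 G u A ∧ ∀ x ∈ nbhd1 G u A, w x ≤ w (n u))
    (C : Finset V)
    (hC : C = A.filter (fun v =>
        (1 - 1 / 5308416 : ℝ) / 2 * w v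
            < ∑ u ∈ Astar.filter (fun u => 0 < charge G w A n u v), charge G w A n u v
        ∧ ∀ u ∈ Astar.filter (fun u => 0 < charge G w A n u v), IsDouble G w A u v))
    (hwC : (25 / 12 : ℝ) * (1 / 5308416) * (1 / 6) * wsum w A ≤ wsum w C) :
    wsum w Astar ≤ ((d : ℝ) - 1 / 5308416 * (1 / 6)) / 2 * wsum w A := by
  classical
  set T : V → Finset V := fun a => Astar.filter (fun u => 0 < charge G w A n u a) with hTdef
  set cS : V → ℝ := fun a => ∑ u ∈ T a, charge G w A n u a with hcSdef
  set B : V → Finset V := fun a => nbhd G (T a) A with hBdef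
  -- membership basics
  have hmemN : ∀ u x, x ∈ nbhd1 G u A ↔ x ∈ A ∧ (x = u ∨ G.Adj u x) := by
    intro u x
    simp [nbhd1, nbhd, Finset.mem_filter]
  have hNsubA : ∀ u, nbhd1 G u A ⊆ A := by
    intro u x hx; exact ((hmemN u x).1 hx).1
  have hTmem : ∀ a u, u ∈ T a ↔ u ∈ Astar ∧ 0 < charge G w A n u a := by
    intro a u; simp [hTdef, Finset.mem_filter]
  have hchargeEq : ∀ u a, 0 < charge G w A n u a → a = n u := by
    intro u a h
    by_contra hne
    rw [charge, if_neg hne] at h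
    exact lt_irrefl 0 h
  have hmemB : ∀ a x, x ∈ B a ↔ x ∈ A ∧ (x ∈ T a ∨ ∃ u ∈ T a, G.Adj u x) := by
    intro a x; simp [hBdef, nbhd, Finset.mem_filter]
  have haNu : ∀ a, ∀ u ∈ T a, a ∈ nbhd1 G u A := by
    intro a u hu
    obtain ⟨huA, hpos⟩ := (hTmem a u).1 hu
    have := hchargeEq u a hpos
    rw [this]
    exact (hn u huA).1
  -- L1 key algebra
  have hL1 : ∀ a, ∀ u ∈ T a, 2 * w a * charge G w A n u a
      ≤ w u ^ 2 - wsq w ((nbhd1 G u A).erase a) := by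
    intro a u hu
    obtain ⟨huA, hpos⟩ := (hTmem a u).1 hu
    have hanu := hchargeEq u a hpos
    have haN : a ∈ nbhd1 G u A := haNu a u hu
    have hmax : ∀ x ∈ nbhd1 G u A, w x ≤ w a := by
      intro x hx; rw [hanu]; exact (hn u huA).2 x hx
    have hsum : w a + wsum w ((nbhd1 G u A).erase a) = wsum w (nbhd1 G u A) :=
      Finset.add_sum_erase _ _ haN
    have hcv : charge G w A n u a = w u - wsum w (nbhd1 G u A) / 2 := by
      rw [charge, if_pos hanu]
    have hnonneg : 0 ≤ w a * wsum w ((nbhd1 G u A).erase a) - wsq w ((nbhd1 G u A).erase a) := by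
      have : w a * wsum w ((nbhd1 G u A).erase a) - wsq w ((nbhd1 G u A).erase a)
          = ∑ x ∈ (nbhd1 G u A).erase a, (w x * (w a - w x)) := by
        rw [wsum, wsq, Finset.mul_sum, ← Finset.sum_sub_distrib]
        apply Finset.sum_congr rfl
        intro x hx; ring
      rw [this]
      apply Finset.sum_nonneg
      intro x hx
      have hx' : x ∈ nbhd1 G u A := Finset.mem_of_mem_erase hx
      have := hmax x hx'
      have := (hw x).le
      nlinarith
    rw [hcv, ← hsum]
    nlinarith [sq_nonneg (w u - w a)]
  have hkey : ∀ a, 2 * w a * cS a ≤ wsq w (T a) - ∑ u ∈ T a, wsq w ((nbhd1 G u A).erase a) := by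
    intro a
    have : 2 * w a * cS a = ∑ u ∈ T a, 2 * w a * charge G w A n u a := by
      rw [hcSdef]; simp [Finset.mul_sum]
    rw [this, wsq, ← Finset.sum_sub_distrib]
    exact Finset.sum_le_sum (fun u hu => hL1 a u hu)
  have hwsqB : ∀ a, wsq w (B a) ≤ w a ^ 2 + ∑ u ∈ T a, wsq w ((nbhd1 G u A).erase a) := by
    intro a
    have hsub : B a ⊆ insert a ((T a).biUnion fun u => (nbhd1 G u A).erase a) := by
      intro x hx
      obtain ⟨hxA, hcase⟩ := (hmemB a x).1 hx
      have : ∃ u ∈ T a, x ∈ nbhd1 G u A := by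
        rcases hcase with hxT | ⟨u, huT, hadj⟩
        · exact ⟨x, hxT, (hmemN x x).2 ⟨hxA, Or.inl rfl⟩⟩
        · exact ⟨u, huT, (hmemN u x).2 ⟨hxA, Or.inr hadj⟩⟩
      obtain ⟨u, huT, hxN⟩ := this
      by_cases hxa : x = a
      · simp [hxa]
      · apply Finset.mem_insert_of_mem
        exact Finset.mem_biUnion.2 ⟨u, huT, Finset.mem_erase.2 ⟨hxa, hxN⟩⟩
    calc wsq w (B a) ≤ wsq w (insert a ((T a).biUnion fun u => (nbhd1 G u A).erase a)) :=
          wsq_mono w hsub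
      _ ≤ w a ^ 2 + wsq w ((T a).biUnion fun u => (nbhd1 G u A).erase a) := by
          by_cases hmem : a ∈ (T a).biUnion fun u => (nbhd1 G u A).erase a
          · rw [Finset.insert_eq_self.2 hmem]
            nlinarith [sq_nonneg (w a)]
          · rw [wsq, Finset.sum_insert hmem]; rfl
      _ ≤ w a ^ 2 + ∑ u ∈ T a, wsq w ((nbhd1 G u A).erase a) := by
          have := wsq_biUnion_le w (T a) (fun u => (nbhd1 G u A).erase a)
          linarith
  -- claw inequality from no improvement
  have hclaw : ∀ X : Finset V, X ⊆ Astar → X.card ≤ (d - 1) ^ 2 + (d - 1) →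
      wsq w X ≤ wsq w (nbhd G X A) := by
    intro X hsub hcard
    have hind : IsIndep G X := fun a ha b hb hab => hAstarIndep a (hsub ha) b (hsub hb) hab
    have := hNoImp X
    rw [LocalImprovement] at this
    push_neg at this
    exact this hind hcard
  have hTsubA : ∀ a, T a ⊆ Astar := by
    intro a u hu; exact ((hTmem a u).1 hu).1
  have hTadj : ∀ a, ∀ u ∈ T a, u = a ∨ G.Adj u a := by
    intro a u hu
    have := (hmemN u a).1 (haNu a u hu)
    rcases this.2 with h | h
    · exact Or.inl h.symm
    · exact Or.inr h
  have hTcard : ∀ a, (T a).card ≤ d := by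
    intro a
    have hadj : ∀ x ∈ (T a).erase a, G.Adj a x := by
      intro x hx
      obtain ⟨hxa, hxT⟩ := Finset.mem_erase.1 hx
      rcases hTadj a x hxT with h | h
      · exact absurd h hxa
      · exact h.symm
    have hind : IsIndep G ((T a).erase a) := fun x hx y hy hxy =>
      hAstarIndep x (hTsubA a (Finset.mem_of_mem_erase hx))
        y (hTsubA a (Finset.mem_of_mem_erase hy)) hxy
    have h1 : ((T a).erase a).card ≤ d - 1 := hG a _ hadj hind
    by_cases ha : a ∈ T a
    · have := Finset.card_erase_add_one ha
      omega
    · rw [Finset.erase_eq_of_notMem ha] at h1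
      omega
  have hcard2 : ∀ a b, (T a ∪ T b).card ≤ (d - 1) ^ 2 + (d - 1) := by
    intro a b
    have h1 := Finset.card_union_le (T a) (T b)
    have h2 := hTcard a
    have h3 := hTcard b
    obtain ⟨e, rfl⟩ : ∃ e, d = e + 3 := ⟨d - 3, by omega⟩
    have : (e + 3 - 1) ^ 2 + (e + 3 - 1) = (e + 2) * (e + 2) + (e + 2) := by
      simp [pow_two]
    rw [this]
    nlinarith
  have hBerman : ∀ a, cS a ≤ w a / 2 := by
    intro a
    have h1 := hkey a
    have h2 := hwsqB a
    have h3 : wsq w (T a) ≤ wsq w (B a) := by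
      have hcard : (T a).card ≤ (d - 1) ^ 2 + (d - 1) := by
        have := hcard2 a a
        simp only [Finset.union_self] at this
        exact this
      exact hclaw (T a) (hTsubA a) hcard
    have hwa := hw a
    nlinarith
  -- facts about C
  have hCfacts : ∀ v ∈ C, v ∈ A ∧ (1 - 1/5308416 : ℝ) / 2 * w v < cS v ∧
      ∀ u ∈ T v, IsDouble G w A u v := by
    intro v hv
    rw [hC] at hv
    obtain ⟨hvA, h1, h2⟩ := Finset.mem_filter.1 hv
    exact ⟨hvA, h1, h2⟩
  have hDbar : ∀ v ∈ C, wsq w (B v) ≤ wsq w (T v) + (1/5308416) * w v ^ 2 := by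
    intro v hv
    obtain ⟨hvA, hcs, _⟩ := hCfacts v hv
    have h1 := hkey v
    have h2 := hwsqB v
    have hwv := hw v
    nlinarith
  have hpair : ∀ v ∈ C, ∀ b : V, b ≠ v → ∀ a, a ∈ B v → a ∈ B b →
      wsq w (T b) + w a ^ 2 ≤ wsq w (B b) + (1/5308416) * w v ^ 2 := by
    intro v hv b hbv a haBv haBb
    have hdisj : Disjoint (T v) (T b) := by
      rw [Finset.disjoint_left]
      intro u huv hub
      have h1 := hchargeEq u v ((hTmem v u).1 huv).2
      have h2 := hchargeEq u b ((hTmem b u).1 hub).2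
      exact hbv (h2.trans h1.symm)
    have hclawU := hclaw (T v ∪ T b)
      (Finset.union_subset (hTsubA v) (hTsubA b)) (hcard2 v b)
    have hNunion : nbhd G (T v ∪ T b) A = B v ∪ B b := by
      ext x
      simp only [hBdef, nbhd, Finset.mem_filter, Finset.mem_union]
      constructor
      · rintro ⟨hxA, h⟩
        rcases h with (h | h) | ⟨u, (hu | hu), hadj⟩
        · exact Or.inl ⟨hxA, Or.inl h⟩
        · exact Or.inr ⟨hxA, Or.inl h⟩
        · exact Or.inl ⟨hxA, Or.inr ⟨u, hu, hadj⟩⟩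
        · exact Or.inr ⟨hxA, Or.inr ⟨u, hu, hadj⟩⟩
      · rintro (⟨hxA, h | ⟨u, hu, hadj⟩⟩ | ⟨hxA, h | ⟨u, hu, hadj⟩⟩)
        · exact ⟨hxA, Or.inl (Or.inl h)⟩
        · exact ⟨hxA, Or.inr ⟨u, Or.inl hu, hadj⟩⟩
        · exact ⟨hxA, Or.inl (Or.inr h)⟩
        · exact ⟨hxA, Or.inr ⟨u, Or.inr hu, hadj⟩⟩
    rw [hNunion] at hclawU
    have hsumU : wsq w (T v ∪ T b) = wsq w (T v) + wsq w (T b) := by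
      rw [wsq, Finset.sum_union hdisj]; rfl
    have hui : wsq w (B v ∪ B b) + wsq w (B v ∩ B b) = wsq w (B v) + wsq w (B b) :=
      Finset.sum_union_inter
    have hainter : w a ^ 2 ≤ wsq w (B v ∩ B b) := by
      apply Finset.single_le_sum (f := fun x => (w x) ^ 2)
        (fun x _ => sq_nonneg (w x))
      exact Finset.mem_inter.2 ⟨haBv, haBb⟩
    have hDv := hDbar v hv
    nlinarith
  have hheavy : ∀ v ∈ C, ∃ a, a ∈ B v ∧ a ≠ v ∧ (1 - 1/2304 : ℝ) * w v ≤ w a ∧ w a ≤ w v := by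
    intro v hv
    obtain ⟨hvA, hcs, hdbl⟩ := hCfacts v hv
    have hTne : (T v).Nonempty := by
      rw [Finset.nonempty_iff_ne_empty]
      intro hemp
      have : cS v = 0 := by rw [hcSdef]; simp [hemp]
      rw [this] at hcs
      have hwv := hw v
      nlinarith
    obtain ⟨u₀, hu₀⟩ := hTne
    obtain ⟨hcard2', v₂, hv₂mem, hmax₂, hr1, hr2, hr3, hr4, hr5, hr6⟩ := hdbl u₀ hu₀
    have hv₂N : v₂ ∈ nbhd1 G u₀ A := Finset.mem_of_mem_erase hv₂mem
    have hv₂ne : v₂ ≠ v := (Finset.mem_erase.1 hv₂mem).1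
    refine ⟨v₂, ?_, hv₂ne, ?_, ?_⟩
    · obtain ⟨hv₂A, hcase⟩ := (hmemN u₀ v₂).1 hv₂N
      apply (hmemB v v₂).2
      refine ⟨hv₂A, ?_⟩
      rcases hcase with h | h
      · exact Or.inl (h ▸ hu₀)
      · exact Or.inr ⟨u₀, hu₀, h⟩
    · exact (le_div_iff₀ (hw v)).1 hr3
    · exact (div_le_one (hw v)).1 hr4
  have hex : ∀ v : V, ∃ a, v ∈ C →
      a ∈ B v ∧ a ≠ v ∧ (1 - 1/2304 : ℝ) * w v ≤ w a ∧ w a ≤ w v := by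
    intro v
    by_cases hv : v ∈ C
    · obtain ⟨a, ha⟩ := hheavy v hv
      exact ⟨a, fun _ => ha⟩
    · exact ⟨v, fun h => absurd h hv⟩
  choose f hf using hex
  -- injectivity on C
  have hinj : ∀ x ∈ C, ∀ y ∈ C, f x = f y → x = y := by
    intro x hx y hy hfeq
    by_contra hne
    obtain ⟨haBx, hanex, hax1, hax2⟩ := hf x hx
    obtain ⟨haBy, haney, hay1, hay2⟩ := hf y hy
    rw [hfeq] at haBx hanex hax1 hax2
    set a := f y
    have hpxy : wsq w (T y) + w a ^ 2 ≤ wsq w (B y) + (1/5308416) * w x ^ 2 := by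
      apply hpair x hx y (fun h => hne h.symm) a haBx
      -- a ∈ B y : from a ∈ B y? we have haBy : f y ∈ B y
      exact haBy
    have hDy := hDbar y hy
    have hwa := hw a
    have hwx := hw x
    have hwy := hw y
    have key : w a ^ 2 ≤ (1/5308416) * (w x ^ 2 + w y ^ 2) := by linarith
    have hxnn : (0:ℝ) ≤ (1 - 1/2304) * w x := by nlinarith
    have hynn : (0:ℝ) ≤ (1 - 1/2304) * w y := by nlinarith
    have hx2 : (5303809/5308416 : ℝ) * w x ^ 2 ≤ w a ^ 2 := by
      have := mul_le_mul hax1 hax1 hxnn hwa.le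
      nlinarith
    have hy2 : (5303809/5308416 : ℝ) * w y ^ 2 ≤ w a ^ 2 := by
      have := mul_le_mul hay1 hay1 hynn hwa.le
      nlinarith
    have hR : (0:ℝ) < w a ^ 2 := by positivity
    linarith
  have hstrong : ∀ v ∈ C, cS (f v) ≤ (1/10607618 : ℝ) * w (f v) := by
    intro v hv
    obtain ⟨haB, hane, ha1, ha2⟩ := hf v hv
    set a := f v
    have hwa := hw a
    have hwv := hw v
    by_cases hTa : (T a).Nonempty
    · have haBa : a ∈ B a := by
        obtain ⟨u, hu⟩ := hTa
        apply (hmemB a a).2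
        have haN := haNu a u hu
        obtain ⟨haA, hcase⟩ := (hmemN u a).1 haN
        refine ⟨haA, ?_⟩
        rcases hcase with h | h
        · exact Or.inl (h ▸ hu)
        · exact Or.inr ⟨u, hu, h⟩
      have hp := hpair v hv a hane a haB haBa
      have h2 := hwsqB a
      have h1 := hkey a
      -- 2 w a cS a ≤ wsq T a - Σ ≤ wsq B a - w a^2 + ε w v^2 - Σ ... combine
      have h3 : 2 * w a * cS a ≤ (1/5308416) * w v ^ 2 := by linarith
      have hvnn : (0:ℝ) ≤ (1 - 1/2304) * w v := by nlinarith
      have hv2 : (5303809/5308416 : ℝ) * w v ^ 2 ≤ w a ^ 2 := by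
        have := mul_le_mul ha1 ha1 hvnn hwa.le
        nlinarith
      have h4 : 2 * w a * cS a ≤ w a ^ 2 / 5303809 := by linarith
      nlinarith [h4, hwa, mul_pos hwa hwa]
    · have : T a = ∅ := Finset.not_nonempty_iff_eq_empty.1 hTa
      have : cS a = 0 := by rw [hcSdef]; simp [this]
      rw [this]
      nlinarith
  set H : Finset V := C.image f with hHdef
  have hHsubA : H ⊆ A := by
    intro a ha
    obtain ⟨v, hv, rfl⟩ := Finset.mem_image.1 ha
    exact ((hmemB v (f v)).1 (hf v hv).1).1
  have hHw : (1 - 1/2304 : ℝ) * wsum w C ≤ wsum w H := by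
    have h0 : ∑ a ∈ H, w a = ∑ v ∈ C, w (f v) := by
      rw [hHdef]; exact Finset.sum_image hinj
    have h2 : ∑ v ∈ C, (1 - 1/2304 : ℝ) * w v ≤ ∑ v ∈ C, w (f v) :=
      Finset.sum_le_sum (fun v hv => (hf v hv).2.2.1)
    have h3 : wsum w H = ∑ a ∈ H, w a := rfl
    have h4 : wsum w C = ∑ v ∈ C, w v := rfl
    rw [h3, h0, h4, Finset.mul_sum]
    exact h2
  have hHbound : ∀ a ∈ H, cS a ≤ (1/10607618 : ℝ) * w a := by
    intro a ha
    obtain ⟨v, hv, rfl⟩ := Finset.mem_image.1 ha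
    exact hstrong v hv
  have hsplit : ∑ a ∈ A, cS a ≤ wsum w A / 2 - (1/2 - 1/10607618 : ℝ) * wsum w H := by
    have h1 : ∑ a ∈ A \ H, cS a + ∑ a ∈ H, cS a = ∑ a ∈ A, cS a :=
      Finset.sum_sdiff hHsubA
    have h2 : ∑ a ∈ A \ H, w a + ∑ a ∈ H, w a = ∑ a ∈ A, w a :=
      Finset.sum_sdiff hHsubA
    have h3 : ∑ a ∈ A \ H, cS a ≤ ∑ a ∈ A \ H, w a / 2 :=
      Finset.sum_le_sum (fun a _ => hBerman a)
    have h4 : ∑ a ∈ H, cS a ≤ ∑ a ∈ H, (1/10607618 : ℝ) * w a :=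
      Finset.sum_le_sum (fun a ha => hHbound a ha)
    have h5 : ∑ a ∈ A \ H, w a / 2 = (∑ a ∈ A \ H, w a) / 2 := by
      rw [Finset.sum_div]
    have h6 : ∑ a ∈ H, (1/10607618 : ℝ) * w a = (1/10607618 : ℝ) * ∑ a ∈ H, w a := by
      rw [Finset.mul_sum]
    have hwH : wsum w H = ∑ a ∈ H, w a := rfl
    have hwA' : wsum w A = ∑ a ∈ A, w a := rfl
    rw [hwH, hwA']
    linarith
  have hmain : wsum w Astar ≤ ((d : ℝ) - 1) / 2 * wsum w A + ∑ a ∈ A, cS a := by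
    have hnuA : ∀ u ∈ Astar, n u ∈ A := fun u hu => hNsubA u (hn u hu).1
    -- decomposition of w u
    have hdecomp : ∀ u : V, w u = charge G w A n u (n u) + wsum w (nbhd1 G u A) / 2 := by
      intro u
      rw [charge, if_pos rfl]
      ring
    -- positive-part bound
    have hchargebd : ∀ u ∈ Astar, charge G w A n u (n u)
        ≤ ∑ a ∈ A, (if 0 < charge G w A n u a then charge G w A n u a else 0) := by
      intro u hu
      have hnonneg : ∀ a ∈ A, (0:ℝ) ≤ if 0 < charge G w A n u a then charge G w A n u a else 0 := by
        intro a _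
        by_cases h : 0 < charge G w A n u a
        · rw [if_pos h]; exact h.le
        · rw [if_neg h]
      have hterm : charge G w A n u (n u)
          ≤ if 0 < charge G w A n u (n u) then charge G w A n u (n u) else 0 := by
        by_cases h : 0 < charge G w A n u (n u)
        · rw [if_pos h]
        · rw [if_neg h]; exact not_lt.1 h
      exact le_trans hterm (Finset.single_le_sum hnonneg (hnuA u hu))
    -- rewrite ∑_A cS as double sum and swap
    have hswap : ∑ a ∈ A, cS a
        = ∑ u ∈ Astar, ∑ a ∈ A, (if 0 < charge G w A n u a then charge G w A n u a else 0) := by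
      rw [← Finset.sum_comm]
      apply Finset.sum_congr rfl
      intro a _
      rw [hcSdef]
      exact Finset.sum_filter _ _
    -- neighborhood double counting
    have hfilterN : ∀ u : V, nbhd1 G u A = A.filter (fun x => x = u ∨ G.Adj u x) := by
      intro u
      ext x
      rw [hmemN, Finset.mem_filter]
    have hcount : ∀ x, ((Astar.filter (fun u => x = u ∨ G.Adj u x)).card : ℝ) ≤ (d : ℝ) - 1 := by
      intro x
      have hcast : ∀ m : ℕ, m ≤ d - 1 → (m : ℝ) ≤ (d : ℝ) - 1 := by
        intro m hm
        have h1 : (m : ℝ) ≤ ((d - 1 : ℕ) : ℝ) := Nat.cast_le.2 hm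
        rwa [Nat.cast_sub (by omega), Nat.cast_one] at h1
      apply hcast
      by_cases hx : x ∈ Astar
      · have hsub : Astar.filter (fun u => x = u ∨ G.Adj u x) ⊆ {x} := by
          intro u hu
          obtain ⟨huA, hcase⟩ := Finset.mem_filter.1 hu
          rcases hcase with h | h
          · simp [h.symm]
          · by_cases hux : u = x
            · simp [hux]
            · exact absurd h (hAstarIndep u huA x hx hux)
        have := Finset.card_le_card hsub
        simp only [Finset.card_singleton] at this
        omega
      · apply hG x
        · intro u hu
          obtain ⟨huA, hcase⟩ := Finset.mem_filter.1 hu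
          rcases hcase with h | h
          · exact absurd (h ▸ huA) hx
          · exact h.symm
        · intro u hu v' hv' huv
          exact hAstarIndep u (Finset.mem_filter.1 hu).1 v' (Finset.mem_filter.1 hv').1 huv
    have hNbd : ∑ u ∈ Astar, wsum w (nbhd1 G u A) ≤ ((d : ℝ) - 1) * wsum w A := by
      have h1 : ∀ u : V, wsum w (nbhd1 G u A)
          = ∑ x ∈ A, (if x = u ∨ G.Adj u x then w x else 0) := by
        intro u
        rw [wsum, hfilterN u]
        exact Finset.sum_filter _ _
      calc ∑ u ∈ Astar, wsum w (nbhd1 G u A)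
          = ∑ x ∈ A, ∑ u ∈ Astar, (if x = u ∨ G.Adj u x then w x else 0) := by
            rw [← Finset.sum_comm]
            exact Finset.sum_congr rfl (fun u _ => h1 u)
        _ = ∑ x ∈ A, ((Astar.filter (fun u => x = u ∨ G.Adj u x)).card : ℝ) * w x := by
            apply Finset.sum_congr rfl
            intro x _
            rw [← Finset.sum_filter, Finset.sum_const, nsmul_eq_mul]
        _ ≤ ∑ x ∈ A, ((d : ℝ) - 1) * w x := by
            apply Finset.sum_le_sum
            intro x _
            exact mul_le_mul_of_nonneg_right (hcount x) (hw x).le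
        _ = ((d : ℝ) - 1) * wsum w A := by
            rw [wsum, Finset.mul_sum]
    -- assemble
    have hA1 : wsum w Astar
        = ∑ u ∈ Astar, charge G w A n u (n u) + (∑ u ∈ Astar, wsum w (nbhd1 G u A)) / 2 := by
      rw [wsum, Finset.sum_congr rfl (fun u _ => hdecomp u), Finset.sum_add_distrib,
        Finset.sum_div]
    have hA2 : ∑ u ∈ Astar, charge G w A n u (n u) ≤ ∑ a ∈ A, cS a := by
      rw [hswap]
      exact Finset.sum_le_sum hchargebd
    rw [hA1]
    linarith
  have hwA : 0 ≤ wsum w A := Finset.sum_nonneg (fun x _ => (hw x).le)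
  -- final arithmetic
  have hHC : wsum w H ≥ (1 - 1/2304 : ℝ) * ((25/12) * (1/5308416) * (1/6) * wsum w A) := by
    calc wsum w H ≥ (1 - 1/2304 : ℝ) * wsum w C := hHw
      _ ≥ (1 - 1/2304 : ℝ) * ((25/12) * (1/5308416) * (1/6) * wsum w A) := by
          apply mul_le_mul_of_nonneg_left hwC (by norm_num)
  have hfin : wsum w Astar ≤ ((d : ℝ)) / 2 * wsum w A - (1/2 - 1/10607618 : ℝ) * wsum w H := by
    calc wsum w Astar ≤ ((d : ℝ) - 1) / 2 * wsum w A + ∑ a ∈ A, cS a := hmain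
      _ ≤ ((d : ℝ) - 1) / 2 * wsum w A + (wsum w A / 2 - (1/2 - 1/10607618 : ℝ) * wsum w H) := by
          linarith
      _ = ((d : ℝ)) / 2 * wsum w A - (1/2 - 1/10607618 : ℝ) * wsum w H := by ring
  have hcoef : (1/2 - 1/10607618 : ℝ) * ((1 - 1/2304) * ((25/12) * (1/5308416) * (1/6)))
      ≥ 1/5308416 * (1/6) / 2 := by norm_num
  have hlast : (1/2 - 1/10607618 : ℝ) * wsum w H
      ≥ (1/5308416 * (1/6) / 2) * wsum w A := by
    calc (1/2 - 1/10607618 : ℝ) * wsum w H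
        ≥ (1/2 - 1/10607618 : ℝ) * ((1 - 1/2304) * ((25/12) * (1/5308416) * (1/6) * wsum w A)) := by
          exact mul_le_mul_of_nonneg_left hHC (by norm_num)
      _ = ((1/2 - 1/10607618 : ℝ) * ((1 - 1/2304) * ((25/12) * (1/5308416) * (1/6)))) * wsum w A := by
          ring
      _ ≥ (1/5308416 * (1/6) / 2) * wsum w A := by
          apply mul_le_mul_of_nonneg_right hcoef hwA
  calc wsum w Astar ≤ ((d : ℝ)) / 2 * wsum w A - (1/2 - 1/10607618 : ℝ) * wsum w H := hfin
    _ ≤ ((d : ℝ)) / 2 * wsum w A - (1/5308416 * (1/6) / 2) * wsum w A := by linarith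
    _ = ((d : ℝ) - 1/5308416 * (1/6)) / 2 * wsum w A := by ring


end
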